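/- In the weighted partition construction, if there is a subset J ⊆ {0,...,n−1} with Σ_{j∈J} k_j = K, then the voting order that, for each j ∈ J, orders the j-th path as 3j ≺ 3j+1 ≺ 3j+2, and for each j ∉ J orders it as 3j+1 ≺ 3j ≺ 3j+2 (followed by the isolated agent), yields final scores: score(b) = KB, score(c) ≤ KB + 2n, and score(a) ≥ KB + 2n, so that a is a co-winner. -/

import Mathlib

open scoped Classical
open Finset

/-- The set of neighbors of `x` (w.r.t. adjacency `adj`) that vote before `x`
in the voting order `ord` (smaller `ord`-value votes earlier). -/
noncomputable def prior {V : Type*} [Fintype V] (adj : V → V → Prop) (ord : V → ℕ) (x : V) :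
    Finset V :=
  Finset.univ.filter fun y => adj x y ∧ ord y < ord x

/-- Refined social poll model: `f` is the (unique) vote function arising from the
voting order `ord`: an agent `x` votes `c ∈ P x` if strictly more than half of her
previously-voting neighbors voted `c`, and otherwise votes her top choice `p1 x`. -/
def Consistent {V C : Type*} [Fintype V] (adj : V → V → Prop)
    (P : V → Finset C) (p1 : V → C) (ord : V → ℕ) (f : V → C) : Prop :=
  ∀ x : V,
    (∃ c ∈ P x,
        (2 * (((prior adj ord x).filter fun y => f y = c).card) > (prior adj ord x).card)
        ∧ f x = c)
    ∨ ((¬ ∃ c ∈ P x,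
          2 * (((prior adj ord x).filter fun y => f y = c).card) > (prior adj ord x).card)
        ∧ f x = p1 x)

/-- The score of candidate `c`: the number of agents voting for `c`. -/
noncomputable def score {V C : Type*} [Fintype V] (f : V → C) (c : C) : ℕ :=
  (Finset.univ.filter fun x => f x = c).card

/-- Weighted refined social poll model: majority influence is measured by total weight. -/
def WConsistent {V C : Type*} [Fintype V] (adj : V → V → Prop) (w : V → ℕ)
    (P : V → Finset C) (p1 : V → C) (ord : V → ℕ) (f : V → C) : Prop :=
  ∀ x : V,
    (∃ c ∈ P x,
        (2 * (((prior adj ord x).filter fun y => f y = c).sum w) > ((prior adj ord x).sum w))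
        ∧ f x = c)
    ∨ ((¬ ∃ c ∈ P x,
          2 * (((prior adj ord x).filter fun y => f y = c).sum w) > ((prior adj ord x).sum w))
        ∧ f x = p1 x)

/-- The weighted score of candidate `c`: total weight of agents voting for `c`. -/
noncomputable def wscore {V C : Type*} [Fintype V] (w : V → ℕ) (f : V → C) (c : C) : ℕ :=
  (Finset.univ.filter fun x => f x = c).sum w

/-! The weighted partition construction. Candidates are `Fin 3` with `a = 0`, `b = 1`,
`c = 2`. For each `j < n` there are three agents `3j, 3j+1, 3j+2` forming a path, with
preferences `(c,b)`, `(a,c)`, `(b,c)` and weights `1`, `1`, `k_j · B` where `B = 2n+1`.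
There is one additional isolated agent `3n` with preferences `(a,c)` and weight `KB + 2n`. -/

def B7 (n : ℕ) : ℕ := 2 * n + 1

def adj7 (n : ℕ) (x y : Fin (3 * n + 1)) : Prop :=
  (x : ℕ) / 3 = (y : ℕ) / 3 ∧ (x : ℕ) / 3 < n ∧
    ((x : ℕ) + 1 = (y : ℕ) ∨ (y : ℕ) + 1 = (x : ℕ))

def P7 (n : ℕ) (x : Fin (3 * n + 1)) : Finset (Fin 3) :=
  if (x : ℕ) = 3 * n then {0, 2}
  else if (x : ℕ) % 3 = 0 then {2, 1}
  else if (x : ℕ) % 3 = 1 then {0, 2}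
  else {1, 2}

def p17 (n : ℕ) (x : Fin (3 * n + 1)) : Fin 3 :=
  if (x : ℕ) = 3 * n then 0
  else if (x : ℕ) % 3 = 0 then 2
  else if (x : ℕ) % 3 = 1 then 0
  else 1

def w7 (n K : ℕ) (k : ℕ → ℕ) (x : Fin (3 * n + 1)) : ℕ :=
  if (x : ℕ) = 3 * n then K * B7 n + 2 * n
  else if (x : ℕ) % 3 = 2 then k ((x : ℕ) / 3) * B7 n
  else 1

/-- The specific voting order: for `j ∈ J` the `j`-th path votes `3j ≺ 3j+1 ≺ 3j+2`,
for `j ∉ J` it votes `3j+1 ≺ 3j ≺ 3j+2`, and the isolated agent votes anywhere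
(different paths are interleaved arbitrarily; only the within-path order matters). -/
noncomputable def ord17 (n : ℕ) (J : Finset ℕ) (x : Fin (3 * n + 1)) : ℕ :=
  if (x : ℕ) = 3 * n then 3 * n
  else 3 * ((x : ℕ) / 3) +
    (if (x : ℕ) / 3 ∈ J then (x : ℕ) % 3
     else if (x : ℕ) % 3 = 0 then 1 else if (x : ℕ) % 3 = 1 then 0 else 2)

section cowinnerHelpers

lemma sum_range_three_mul (n : ℕ) (F : ℕ → ℕ) :
    ∑ i ∈ Finset.range (3*n), F i
      = ∑ j ∈ Finset.range n, (F (3*j) + F (3*j+1) + F (3*j+2)) := by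
  induction n with
  | zero => simp
  | succ m ih =>
    have h : 3*(m+1) = 3*m+1+1+1 := by ring
    rw [h, Finset.sum_range_succ, Finset.sum_range_succ, Finset.sum_range_succ, ih,
      Finset.sum_range_succ]
    have e : 3*m+1+1 = 3*m+2 := by omega
    rw [e]
    omega

section votes
variable {V C : Type*} [Fintype V] {adj : V → V → Prop} {w : V → ℕ}
  {P : V → Finset C} {p1 : V → C} {ord : V → ℕ} {f : V → C}

lemma vote_empty (hf : WConsistent adj w P p1 ord f) (x : V)
    (hx : prior adj ord x = ∅) : f x = p1 x := by
  rcases hf x with ⟨c, _, hmaj, _⟩ | ⟨_, h⟩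
  · rw [hx] at hmaj; simp at hmaj
  · exact h

lemma vote_single_mem (hf : WConsistent adj w P p1 ord f) (x y : V)
    (hx : prior adj ord x = {y}) (hw : 0 < w y) (hy : f y ∈ P x) : f x = f y := by
  rcases hf x with ⟨c, hcP, hmaj, hfx⟩ | ⟨hno, _⟩
  · rw [hx, Finset.filter_singleton] at hmaj
    by_cases h : f y = c
    · rw [hfx, h]
    · rw [if_neg h] at hmaj
      simp only [Finset.sum_empty, Finset.sum_singleton] at hmaj
      omega
  · exact absurd ⟨f y, hy, by
      rw [hx, Finset.filter_singleton, if_pos rfl, Finset.sum_singleton]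
      omega⟩ hno

lemma vote_single_not_mem (hf : WConsistent adj w P p1 ord f) (x y : V)
    (hx : prior adj ord x = {y}) (hy : f y ∉ P x) : f x = p1 x := by
  rcases hf x with ⟨c, hcP, hmaj, _⟩ | ⟨_, h⟩
  · exfalso
    have hne : f y ≠ c := fun h => hy (h ▸ hcP)
    rw [hx, Finset.filter_singleton, if_neg hne] at hmaj
    simp only [Finset.sum_empty, Finset.sum_singleton] at hmaj
    omega
  · exact h

end votes

lemma mem_prior17 {n : ℕ} (J : Finset ℕ) (x y : Fin (3*n+1)) :
    y ∈ prior (adj7 n) (ord17 n J) x ↔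
      ((x:ℕ)/3 = (y:ℕ)/3 ∧ (x:ℕ)/3 < n ∧ ((x:ℕ)+1 = (y:ℕ) ∨ (y:ℕ)+1 = (x:ℕ))) ∧
        ord17 n J y < ord17 n J x := by
  simp only [prior, Finset.mem_filter, Finset.mem_univ, true_and]
  exact Iff.rfl

lemma ord17_eq0 (n : ℕ) (J : Finset ℕ) (j : ℕ) (hj : j < n) (y : Fin (3*n+1))
    (hy : (y:ℕ) = 3*j) : ord17 n J y = if j ∈ J then 3*j else 3*j+1 := by
  have hne : ¬((y:ℕ) = 3*n) := by omega
  have hd : (y:ℕ)/3 = j := by omega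
  have hm : (y:ℕ)%3 = 0 := by omega
  by_cases h : j ∈ J <;> simp [ord17, hne, hd, hm, h]

lemma ord17_eq1 (n : ℕ) (J : Finset ℕ) (j : ℕ) (hj : j < n) (y : Fin (3*n+1))
    (hy : (y:ℕ) = 3*j+1) : ord17 n J y = if j ∈ J then 3*j+1 else 3*j := by
  have hne : ¬((y:ℕ) = 3*n) := by omega
  have hd : (y:ℕ)/3 = j := by omega
  have hm : (y:ℕ)%3 = 1 := by omega
  by_cases h : j ∈ J <;> simp [ord17, hne, hd, hm, h]

lemma ord17_eq2 (n : ℕ) (J : Finset ℕ) (j : ℕ) (hj : j < n) (y : Fin (3*n+1))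
    (hy : (y:ℕ) = 3*j+2) : ord17 n J y = 3*j+2 := by
  have hne : ¬((y:ℕ) = 3*n) := by omega
  have hd : (y:ℕ)/3 = j := by omega
  have hm : (y:ℕ)%3 = 2 := by omega
  by_cases h : j ∈ J <;> simp [ord17, hne, hd, hm, h]

end cowinnerHelpers
section cowinnerPriors

lemma prior_iso17 (n : ℕ) (J : Finset ℕ) (x : Fin (3*n+1)) (hx : (x:ℕ) = 3*n) :
    prior (adj7 n) (ord17 n J) x = ∅ := by
  ext z
  simp only [mem_prior17, Finset.notMem_empty, iff_false]
  rintro ⟨⟨h1, h2, h3⟩, h4⟩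
  omega

lemma prior_first_inJ (n : ℕ) (J : Finset ℕ) (j : ℕ) (hj : j < n) (hjJ : j ∈ J)
    (x : Fin (3*n+1)) (hx : (x:ℕ) = 3*j) :
    prior (adj7 n) (ord17 n J) x = ∅ := by
  ext z
  simp only [mem_prior17, Finset.notMem_empty, iff_false]
  rintro ⟨⟨h1, h2, h3⟩, h4⟩
  have hz : (z:ℕ) = 3*j+1 := by omega
  rw [ord17_eq1 n J j hj z hz, ord17_eq0 n J j hj x hx, if_pos hjJ, if_pos hjJ] at h4
  omega

lemma prior_first_outJ (n : ℕ) (J : Finset ℕ) (j : ℕ) (hj : j < n) (hjJ : j ∉ J)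
    (x : Fin (3*n+1)) (hx : (x:ℕ) = 3*j+1) :
    prior (adj7 n) (ord17 n J) x = ∅ := by
  ext z
  simp only [mem_prior17, Finset.notMem_empty, iff_false]
  rintro ⟨⟨h1, h2, h3⟩, h4⟩
  have hz : (z:ℕ) = 3*j ∨ (z:ℕ) = 3*j+2 := by omega
  rw [ord17_eq1 n J j hj x hx, if_neg hjJ] at h4
  rcases hz with hz | hz
  · rw [ord17_eq0 n J j hj z hz, if_neg hjJ] at h4
    omega
  · rw [ord17_eq2 n J j hj z hz] at h4
    omega

lemma prior_snd_inJ (n : ℕ) (J : Finset ℕ) (j : ℕ) (hj : j < n) (hjJ : j ∈ J)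
    (x y : Fin (3*n+1)) (hx : (x:ℕ) = 3*j+1) (hy : (y:ℕ) = 3*j) :
    prior (adj7 n) (ord17 n J) x = {y} := by
  ext z
  simp only [mem_prior17, Finset.mem_singleton]
  constructor
  · rintro ⟨⟨h1, h2, h3⟩, h4⟩
    have hz : (z:ℕ) = 3*j ∨ (z:ℕ) = 3*j+2 := by omega
    rcases hz with hz | hz
    · exact Fin.ext (by omega)
    · rw [ord17_eq2 n J j hj z hz, ord17_eq1 n J j hj x hx, if_pos hjJ] at h4
      omega
  · rintro rfl
    refine ⟨⟨by omega, by omega, by omega⟩, ?_⟩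
    rw [ord17_eq0 n J j hj z hy, ord17_eq1 n J j hj x hx, if_pos hjJ, if_pos hjJ]
    omega

lemma prior_fst_outJ (n : ℕ) (J : Finset ℕ) (j : ℕ) (hj : j < n) (hjJ : j ∉ J)
    (x y : Fin (3*n+1)) (hx : (x:ℕ) = 3*j) (hy : (y:ℕ) = 3*j+1) :
    prior (adj7 n) (ord17 n J) x = {y} := by
  ext z
  simp only [mem_prior17, Finset.mem_singleton]
  constructor
  · rintro ⟨⟨h1, h2, h3⟩, h4⟩
    exact Fin.ext (by omega)
  · rintro rfl
    refine ⟨⟨by omega, by omega, by omega⟩, ?_⟩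
    rw [ord17_eq1 n J j hj z hy, ord17_eq0 n J j hj x hx, if_neg hjJ, if_neg hjJ]
    omega

lemma prior_third17 (n : ℕ) (J : Finset ℕ) (j : ℕ) (hj : j < n)
    (x y : Fin (3*n+1)) (hx : (x:ℕ) = 3*j+2) (hy : (y:ℕ) = 3*j+1) :
    prior (adj7 n) (ord17 n J) x = {y} := by
  ext z
  simp only [mem_prior17, Finset.mem_singleton]
  constructor
  · rintro ⟨⟨h1, h2, h3⟩, h4⟩
    exact Fin.ext (by omega)
  · rintro rfl
    refine ⟨⟨by omega, by omega, by omega⟩, ?_⟩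
    rw [ord17_eq1 n J j hj z hy, ord17_eq2 n J j hj x hx]
    split_ifs <;> omega

end cowinnerPriors
/-- The explicit vote function produced by the order `ord17`. -/
def F17 (n : ℕ) (J : Finset ℕ) (m : ℕ) : Fin 3 :=
  if m = 3*n then 0
  else if m % 3 = 0 then 2
  else if m % 3 = 1 then (if m/3 ∈ J then 2 else 0)
  else (if m/3 ∈ J then 2 else 1)

/-- The weight function as a function of the numeric index. -/
def W17 (n K : ℕ) (k : ℕ → ℕ) (m : ℕ) : ℕ :=
  if m = 3*n then K * B7 n + 2*n else if m % 3 = 2 then k (m/3) * B7 n else 1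

lemma F17_at0 (n : ℕ) (J : Finset ℕ) (j : ℕ) (hj : j < n) : F17 n J (3*j) = 2 := by
  have h1 : ¬(3*j = 3*n) := by omega
  have h2 : (3*j) % 3 = 0 := by omega
  simp [F17, h1, h2]

lemma F17_at1 (n : ℕ) (J : Finset ℕ) (j : ℕ) (hj : j < n) :
    F17 n J (3*j+1) = if j ∈ J then 2 else 0 := by
  have h1 : ¬(3*j+1 = 3*n) := by omega
  have h2 : (3*j+1) % 3 = 1 := by omega
  have h3 : (3*j+1) / 3 = j := by omega
  simp [F17, h1, h2, h3]

lemma F17_at2 (n : ℕ) (J : Finset ℕ) (j : ℕ) (hj : j < n) :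
    F17 n J (3*j+2) = if j ∈ J then 2 else 1 := by
  have h1 : ¬(3*j+2 = 3*n) := by omega
  have h2 : (3*j+2) % 3 = 2 := by omega
  have h3 : (3*j+2) / 3 = j := by omega
  simp [F17, h1, h2, h3]

lemma W17_at0 (n K : ℕ) (k : ℕ → ℕ) (j : ℕ) (hj : j < n) : W17 n K k (3*j) = 1 := by
  have h1 : ¬(3*j = 3*n) := by omega
  have h2 : (3*j) % 3 = 0 := by omega
  simp [W17, h1, h2]

lemma W17_at1 (n K : ℕ) (k : ℕ → ℕ) (j : ℕ) (hj : j < n) : W17 n K k (3*j+1) = 1 := by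
  have h1 : ¬(3*j+1 = 3*n) := by omega
  have h2 : (3*j+1) % 3 = 1 := by omega
  simp [W17, h1, h2]

lemma W17_at2 (n K : ℕ) (k : ℕ → ℕ) (j : ℕ) (hj : j < n) :
    W17 n K k (3*j+2) = k j * B7 n := by
  have h1 : ¬(3*j+2 = 3*n) := by omega
  have h2 : (3*j+2) % 3 = 2 := by omega
  have h3 : (3*j+2) / 3 = j := by omega
  simp [W17, h1, h2, h3]
/-- If `J ⊆ {0,…,n-1}` satisfies `∑_{j ∈ J} k_j = K`, then the voting order `ord17`
yields final scores `score(b) = KB`, `score(c) ≤ KB + 2n`, `score(a) ≥ KB + 2n`, so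
that `a` is a co-winner. (Candidates: `a = 0`, `b = 1`, `c = 2`.) -/
theorem partition_order_scores
    (n K : ℕ) (k : ℕ → ℕ) (J : Finset ℕ)
    (hJ : J ⊆ Finset.range n)
    (hsum : ∑ j ∈ Finset.range n, k j = 2 * K)
    (hsumJ : ∑ j ∈ J, k j = K)
    (f : Fin (3 * n + 1) → Fin 3)
    (hf : WConsistent (adj7 n) (w7 n K k) (P7 n) (p17 n) (ord17 n J) f) :
    wscore (w7 n K k) f 1 = K * B7 n ∧
    wscore (w7 n K k) f 2 ≤ K * B7 n + 2 * n ∧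
    K * B7 n + 2 * n ≤ wscore (w7 n K k) f 0 ∧
    ∀ d : Fin 3, wscore (w7 n K k) f d ≤ wscore (w7 n K k) f 0 := by
  -- Step 1: determine all votes.
  have hiso : ∀ x : Fin (3*n+1), (x:ℕ) = 3*n → f x = 0 := by
    intro x hx
    rw [vote_empty hf x (prior_iso17 n J x hx)]
    simp [p17, hx]
  have h1out : ∀ x : Fin (3*n+1), (x:ℕ) < 3*n → (x:ℕ) % 3 = 1 → (x:ℕ)/3 ∉ J → f x = 0 := by
    intro x hlt hm hJx
    have hj : (x:ℕ)/3 < n := by omega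
    have hx : (x:ℕ) = 3*((x:ℕ)/3)+1 := by omega
    rw [vote_empty hf x (prior_first_outJ n J _ hj hJx x hx)]
    simp only [p17]
    split_ifs <;> first | rfl | omega
  have h0 : ∀ x : Fin (3*n+1), (x:ℕ) < 3*n → (x:ℕ) % 3 = 0 → f x = 2 := by
    intro x hlt hm
    have hj : (x:ℕ)/3 < n := by omega
    have hx : (x:ℕ) = 3*((x:ℕ)/3) := by omega
    by_cases hJx : (x:ℕ)/3 ∈ J
    · rw [vote_empty hf x (prior_first_inJ n J _ hj hJx x hx)]
      simp only [p17]
      split_ifs <;> first | rfl | omega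
    · set y : Fin (3*n+1) := ⟨3*((x:ℕ)/3)+1, by omega⟩ with hydef
      have hyv : (y:ℕ) = 3*((x:ℕ)/3)+1 := rfl
      have hfy : f y = 0 := h1out y (by omega) (by omega) (by
        have hyd : (y:ℕ)/3 = (x:ℕ)/3 := by omega
        rw [hyd]; exact hJx)
      have hp := prior_fst_outJ n J _ hj hJx x y hx hyv
      rw [vote_single_not_mem hf x y hp (by
        rw [hfy]
        simp only [P7]
        split_ifs <;> first | decide | omega)]
      simp only [p17]
      split_ifs <;> first | rfl | omega
  have h1 : ∀ x : Fin (3*n+1), (x:ℕ) < 3*n → (x:ℕ) % 3 = 1 →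
      f x = if (x:ℕ)/3 ∈ J then 2 else 0 := by
    intro x hlt hm
    have hj : (x:ℕ)/3 < n := by omega
    have hx : (x:ℕ) = 3*((x:ℕ)/3)+1 := by omega
    by_cases hJx : (x:ℕ)/3 ∈ J
    · rw [if_pos hJx]
      set y : Fin (3*n+1) := ⟨3*((x:ℕ)/3), by omega⟩ with hydef
      have hyv : (y:ℕ) = 3*((x:ℕ)/3) := rfl
      have hfy : f y = 2 := h0 y (by omega) (by omega)
      have hp := prior_snd_inJ n J _ hj hJx x y hx hyv
      have hw : 0 < w7 n K k y := by
        simp only [w7]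
        split_ifs <;> omega
      rw [vote_single_mem hf x y hp hw (by
        rw [hfy]
        simp only [P7]
        split_ifs <;> first | decide | omega), hfy]
    · rw [if_neg hJx]
      exact h1out x hlt hm hJx
  have h2 : ∀ x : Fin (3*n+1), (x:ℕ) < 3*n → (x:ℕ) % 3 = 2 →
      f x = if (x:ℕ)/3 ∈ J then 2 else 1 := by
    intro x hlt hm
    have hj : (x:ℕ)/3 < n := by omega
    have hx : (x:ℕ) = 3*((x:ℕ)/3)+2 := by omega
    set y : Fin (3*n+1) := ⟨3*((x:ℕ)/3)+1, by omega⟩ with hydef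
    have hyv : (y:ℕ) = 3*((x:ℕ)/3)+1 := rfl
    have hyJ : (y:ℕ)/3 = (x:ℕ)/3 := by omega
    have hfy : f y = if (x:ℕ)/3 ∈ J then 2 else 0 := by
      rw [h1 y (by omega) (by omega), hyJ]
    have hp := prior_third17 n J _ hj x y hx hyv
    by_cases hJx : (x:ℕ)/3 ∈ J
    · rw [if_pos hJx]
      rw [if_pos hJx] at hfy
      have hw : 0 < w7 n K k y := by
        simp only [w7]
        split_ifs <;> omega
      rw [vote_single_mem hf x y hp hw (by
        rw [hfy]
        simp only [P7]
        split_ifs <;> first | decide | omega), hfy]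
    · rw [if_neg hJx]
      rw [if_neg hJx] at hfy
      rw [vote_single_not_mem hf x y hp (by
        rw [hfy]
        simp only [P7]
        split_ifs <;> first | decide | omega)]
      simp only [p17]
      split_ifs <;> first | rfl | omega
  have key : ∀ x : Fin (3*n+1), f x = F17 n J (x:ℕ) := by
    intro x
    by_cases hx : (x:ℕ) = 3*n
    · rw [hiso x hx]; simp [F17, hx]
    · have hlt : (x:ℕ) < 3*n := by have := x.isLt; omega
      have hm : (x:ℕ)%3 = 0 ∨ (x:ℕ)%3 = 1 ∨ (x:ℕ)%3 = 2 := by omega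
      rcases hm with hm | hm | hm
      · rw [h0 x hlt hm]; simp [F17, hx, hm]
      · rw [h1 x hlt hm]; simp [F17, hx, hm]
      · rw [h2 x hlt hm]; simp [F17, hx, hm]
  -- Step 2: rewrite the scores as explicit sums.
  have hw7 : ∀ x : Fin (3*n+1), w7 n K k x = W17 n K k (x:ℕ) := fun x => rfl
  have hws : ∀ c : Fin 3, wscore (w7 n K k) f c
      = (∑ j ∈ Finset.range n,
          ((if F17 n J (3*j) = c then W17 n K k (3*j) else 0)
            + (if F17 n J (3*j+1) = c then W17 n K k (3*j+1) else 0)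
            + (if F17 n J (3*j+2) = c then W17 n K k (3*j+2) else 0)))
        + (if (0:Fin 3) = c then K * B7 n + 2*n else 0) := by
    intro c
    calc wscore (w7 n K k) f c
        = ∑ x ∈ Finset.univ.filter (fun x : Fin (3*n+1) => F17 n J (x:ℕ) = c),
            w7 n K k x := by
          unfold wscore
          congr 1
          ext x
          simp [key x]
      _ = ∑ x : Fin (3*n+1), if F17 n J (x:ℕ) = c then W17 n K k (x:ℕ) else 0 := by
          rw [Finset.sum_filter]
          exact Finset.sum_congr rfl (fun x _ => by rw [hw7 x])
      _ = ∑ i ∈ Finset.range (3*n+1), (if F17 n J i = c then W17 n K k i else 0) :=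
          Fin.sum_univ_eq_sum_range (fun m => if F17 n J m = c then W17 n K k m else 0) (3*n+1)
      _ = (∑ i ∈ Finset.range (3*n), (if F17 n J i = c then W17 n K k i else 0))
            + (if F17 n J (3*n) = c then W17 n K k (3*n) else 0) := Finset.sum_range_succ _ _
      _ = _ := by
          rw [sum_range_three_mul]
          congr 1
          simp [F17, W17]
  -- Step 3: the three score bounds.
  have hb : wscore (w7 n K k) f 1 = K * B7 n := by
    rw [hws 1]
    have hterm : ∀ j ∈ Finset.range n,
        ((if F17 n J (3*j) = 1 then W17 n K k (3*j) else 0)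
          + (if F17 n J (3*j+1) = 1 then W17 n K k (3*j+1) else 0)
          + (if F17 n J (3*j+2) = 1 then W17 n K k (3*j+2) else 0))
        = if j ∈ J then 0 else k j * B7 n := by
      intro j hj
      rw [Finset.mem_range] at hj
      rw [F17_at0 n J j hj, F17_at1 n J j hj, F17_at2 n J j hj,
        W17_at0 n K k j hj, W17_at1 n K k j hj, W17_at2 n K k j hj]
      by_cases hJx : j ∈ J <;>
        simp [hJx, (by decide : ¬((2:Fin 3) = 1)), (by decide : ¬((0:Fin 3) = 1))]
    rw [Finset.sum_congr rfl hterm, ← Finset.sum_sdiff hJ]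
    rw [Finset.sum_eq_zero (fun j hj => if_pos hj), add_zero]
    rw [Finset.sum_congr rfl
      (fun j hj => if_neg (Finset.mem_sdiff.mp hj).2 :
        ∀ j ∈ Finset.range n \ J, (if j ∈ J then 0 else k j * B7 n) = k j * B7 n)]
    rw [← Finset.sum_mul]
    have hK : ∑ j ∈ Finset.range n \ J, k j = K := by
      have h := Finset.sum_sdiff (f := k) hJ
      omega
    rw [hK]
    simp [(by decide : ¬((0:Fin 3) = 1))]
  have hc : wscore (w7 n K k) f 2 ≤ K * B7 n + 2 * n := by
    rw [hws 2]
    have hterm : ∀ j ∈ Finset.range n,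
        ((if F17 n J (3*j) = 2 then W17 n K k (3*j) else 0)
          + (if F17 n J (3*j+1) = 2 then W17 n K k (3*j+1) else 0)
          + (if F17 n J (3*j+2) = 2 then W17 n K k (3*j+2) else 0))
        = if j ∈ J then 1 + 1 + k j * B7 n else 1 := by
      intro j hj
      rw [Finset.mem_range] at hj
      rw [F17_at0 n J j hj, F17_at1 n J j hj, F17_at2 n J j hj,
        W17_at0 n K k j hj, W17_at1 n K k j hj, W17_at2 n K k j hj]
      by_cases hJx : j ∈ J <;>
        simp [hJx, (by decide : ¬((0:Fin 3) = 2)), (by decide : ¬((1:Fin 3) = 2))]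
    rw [Finset.sum_congr rfl hterm]
    have hle : ∑ j ∈ Finset.range n, (if j ∈ J then 1 + 1 + k j * B7 n else 1)
        ≤ ∑ j ∈ Finset.range n, (2 + if j ∈ J then k j * B7 n else 0) := by
      refine Finset.sum_le_sum fun j _ => ?_
      split_ifs <;> omega
    have hsum2 : ∑ j ∈ Finset.range n, (2 + if j ∈ J then k j * B7 n else 0)
        = 2*n + K * B7 n := by
      rw [Finset.sum_add_distrib, Finset.sum_const, Finset.card_range, smul_eq_mul,
        Finset.sum_ite_mem, Finset.inter_eq_right.mpr hJ, ← Finset.sum_mul, hsumJ]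
      ring
    have hlast : (if (0:Fin 3) = 2 then K * B7 n + 2*n else 0) = 0 := by
      simp [(by decide : ¬((0:Fin 3) = 2))]
    rw [hlast, add_zero]
    omega
  have ha : K * B7 n + 2 * n ≤ wscore (w7 n K k) f 0 := by
    rw [hws 0]
    have h00 : (if (0:Fin 3) = 0 then K * B7 n + 2*n else 0) = K * B7 n + 2*n := if_pos rfl
    rw [h00]
    exact Nat.le_add_left _ _
  refine ⟨hb, hc, ha, ?_⟩
  intro d
  have hd : d = 0 ∨ d = 1 ∨ d = 2 := by revert d; decide
  rcases hd with rfl | rfl | rfl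
  · exact le_rfl
  · rw [hb]; omega
  · exact le_trans hc ha
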